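/- Let G be a modular graph with at least three vertices. Then SW_3(G) = ((|V(G)|−2)/2)·W(G). -/

import Mathlib

open Finset SimpleGraph Polynomial

/-- The Steiner distance of a vertex set `S`: the minimum number of edges of a
connected subgraph of `G` whose vertex set contains `S`. -/
noncomputable def steinerDist {V : Type*} (G : SimpleGraph V) (S : Set V) : ℕ :=
  sInf {n | ∃ H : G.Subgraph, H.Connected ∧ S ⊆ H.verts ∧ H.edgeSet.ncard = n}

/-- The Steiner `k`-Wiener index. -/
noncomputable def SW {V : Type*} [Fintype V] [DecidableEq V] (k : ℕ) (G : SimpleGraph V) : ℕ :=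
  ∑ S ∈ Finset.powersetCard k (Finset.univ : Finset V), steinerDist G (S : Set V)

/-- The Steiner `k`-hyper-Wiener index. -/
noncomputable def SWW {V : Type*} [Fintype V] [DecidableEq V] (k : ℕ) (G : SimpleGraph V) : ℝ :=
  (1/2) * ∑ S ∈ Finset.powersetCard k (Finset.univ : Finset V), (steinerDist G (S : Set V) : ℝ)
    + (1/2) * ∑ S ∈ Finset.powersetCard k (Finset.univ : Finset V), (steinerDist G (S : Set V) : ℝ) ^ 2

/-- The Steiner `k`-Hosoya polynomial `∑_{m ≥ 0} d_k(G,m) x^m`, written as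
`∑_{S ⊆ V(G), |S| = k} x^{d(S)}`. -/
noncomputable def SH {V : Type*} [Fintype V] [DecidableEq V] (k : ℕ) (G : SimpleGraph V) :
    Polynomial ℝ :=
  ∑ S ∈ Finset.powersetCard k (Finset.univ : Finset V), Polynomial.X ^ (steinerDist G (S : Set V))

/-- The Wiener index `W(G) = ∑_{{u,v} ⊆ V(G)} d(u,v)` (each unordered pair counted once). -/
noncomputable def wiener {V : Type*} [Fintype V] [DecidableEq V] (G : SimpleGraph V) : ℝ :=
  (∑ p ∈ Finset.univ.offDiag, (G.dist p.1 p.2 : ℝ)) / 2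

/-- `\overline{WW}(G) = ∑_{{u,v} ⊆ V(G)} d(u,v)²`. -/
noncomputable def WWbar {V : Type*} [Fintype V] [DecidableEq V] (G : SimpleGraph V) : ℝ :=
  (∑ p ∈ Finset.univ.offDiag, (G.dist p.1 p.2 : ℝ) ^ 2) / 2

/-- The set of ordered triples of pairwise distinct vertices. -/
def O3 (V : Type*) [Fintype V] [DecidableEq V] : Finset (V × V × V) :=
  Finset.univ.filter fun t => t.1 ≠ t.2.1 ∧ t.1 ≠ t.2.2 ∧ t.2.1 ≠ t.2.2

/-- `\widehat{WW}(G) = ∑_{(u,v,w) ∈ O₃(G)} d(u,v)·d(u,w)`. -/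
noncomputable def WWhat {V : Type*} [Fintype V] [DecidableEq V] (G : SimpleGraph V) : ℝ :=
  ∑ t ∈ O3 V, (G.dist t.1 t.2.1 : ℝ) * (G.dist t.1 t.2.2 : ℝ)

/-- `z` is a median of the triple `u, v, w`: it lies on a shortest `u,v`-path, a shortest
`u,w`-path and a shortest `v,w`-path. -/
def IsMedian {V : Type*} (G : SimpleGraph V) (u v w z : V) : Prop :=
  G.dist u z + G.dist z v = G.dist u v ∧
  G.dist u z + G.dist z w = G.dist u w ∧
  G.dist v z + G.dist z w = G.dist v w

/-- A modular graph: a connected graph in which every triple of vertices has a median. -/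
def IsModular {V : Type*} (G : SimpleGraph V) : Prop :=
  G.Connected ∧ ∀ u v w : V, ∃ z : V, IsMedian G u v w z

/-- The hypercube graph `Q_n` on `Fin n → Bool`: two vertices are adjacent iff they differ
in exactly one coordinate. -/
def hypercubeGraph (n : ℕ) : SimpleGraph (Fin n → Bool) :=
  SimpleGraph.fromRel fun x y => ∃! i, x i ≠ y i

/-- A partial cube: a connected graph isometrically embeddable into a hypercube. -/
def IsPartialCube {V : Type*} (G : SimpleGraph V) : Prop :=
  G.Connected ∧ ∃ (n : ℕ) (f : V → (Fin n → Bool)),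
    ∀ u v : V, (hypercubeGraph n).dist (f u) (f v) = G.dist u v

/-- The Djoković–Winkler relation Θ on (edges viewed as) unordered pairs:
`s(u₁,v₁) Θ s(u₂,v₂)` iff `d(u₁,u₂) + d(v₁,v₂) ≠ d(u₁,v₂) + d(v₁,u₂)`. -/
def theta {V : Type*} (G : SimpleGraph V) (e f : Sym2 V) : Prop :=
  ∃ u₁ v₁ u₂ v₂ : V, e = s(u₁, v₁) ∧ f = s(u₂, v₂) ∧
    G.dist u₁ u₂ + G.dist v₁ v₂ ≠ G.dist u₁ v₂ + G.dist v₁ u₂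

/-- `E` together with the component data `U`, `U'` is the family of Θ-classes of the
partial cube `G`: each `E i` is a Θ-class of edges, the classes are pairwise distinct and
cover the edge set, and `U i`, `U' i` are (the vertex sets of) the two connected components
of `G - E i`. -/
def IsThetaClassSetup {V : Type*} (G : SimpleGraph V) (d : ℕ)
    (E : Fin d → Set (Sym2 V)) (U U' : Fin d → Set V) : Prop :=
  (∀ i, ∃ e ∈ G.edgeSet, E i = {f | f ∈ G.edgeSet ∧ theta G f e}) ∧
  Function.Injective E ∧
  G.edgeSet = ⋃ i, E i ∧
  ∀ i, ∃ c c' : (G.deleteEdges (E i)).ConnectedComponent, c ≠ c' ∧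
    U i = c.supp ∧ U' i = c'.supp ∧
    ∀ b : (G.deleteEdges (E i)).ConnectedComponent, b = c ∨ b = c'

lemma sum3_dist_le {W : Type*} [Finite W] (H : SimpleGraph W) (hc : H.Connected)
    (u v w : W) : H.dist u v + H.dist u w + H.dist v w ≤ 2 * H.edgeSet.ncard := by
  classical
  obtain ⟨p, hp, hpl⟩ := hc.exists_path_of_dist v w
  obtain ⟨z, hzmem, hzmin⟩ := (p.support.toFinset).exists_min_image (H.dist u)
    ⟨v, by simp⟩
  rw [List.mem_toFinset] at hzmem
  obtain ⟨q, hq, hql⟩ := hc.exists_path_of_dist u z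
  -- any common support vertex of q and p equals z
  have key : ∀ x, x ∈ q.support → x ∈ p.support → x = z := by
    intro x hxq hxp
    have h1 : (q.takeUntil x hxq).length + (q.dropUntil x hxq).length = q.length := by
      have := congrArg Walk.length (q.take_spec hxq)
      rwa [Walk.length_append] at this
    have h2 : H.dist u x ≤ (q.takeUntil x hxq).length := dist_le _
    have h3 : H.dist x z ≤ (q.dropUntil x hxq).length := dist_le _
    have h4 : H.dist u z ≤ H.dist u x := hzmin x (List.mem_toFinset.mpr hxp)
    have h5 : H.dist x z = 0 := by omega
    exact (hc.dist_eq_zero_iff).mp h5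
  -- edges of q and p are disjoint
  have hdisj : ∀ e ∈ q.edges, e ∉ p.edges := by
    intro e heq hep
    induction e with
    | h a b =>
      have ha : a = z := key a (q.fst_mem_support_of_mem_edges heq)
        (p.fst_mem_support_of_mem_edges hep)
      have hb : b = z := key b (q.snd_mem_support_of_mem_edges heq)
        (p.snd_mem_support_of_mem_edges hep)
      have : H.Adj a b := q.edges_subset_edgeSet heq
      rw [ha, hb] at this
      exact H.irrefl this
  have hnodup : (q.edges ++ p.edges).Nodup :=
    List.Nodup.append hq.isTrail.edges_nodup hp.isTrail.edges_nodup hdisj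
  have hcount : q.length + p.length ≤ H.edgeSet.ncard := by
    have hsub : ((q.edges ++ p.edges).toFinset : Set (Sym2 W)) ⊆ H.edgeSet := by
      intro e he
      simp only [Finset.coe_insert, List.coe_toFinset, Set.mem_setOf_eq,
        List.mem_append] at he
      rcases he with he | he
      · exact q.edges_subset_edgeSet he
      · exact p.edges_subset_edgeSet he
    calc q.length + p.length = (q.edges ++ p.edges).length := by
          rw [List.length_append, Walk.length_edges, Walk.length_edges]
      _ = (q.edges ++ p.edges).toFinset.card := (List.toFinset_card_of_nodup hnodup).symm
      _ = ((q.edges ++ p.edges).toFinset : Set (Sym2 W)).ncard := (Set.ncard_coe_finset _).symm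
      _ ≤ H.edgeSet.ncard := Set.ncard_le_ncard hsub (Set.toFinite _)
  -- distance estimates
  have hzp : (p.takeUntil z hzmem).length + (p.dropUntil z hzmem).length = p.length := by
    have := congrArg Walk.length (p.take_spec hzmem)
    rwa [Walk.length_append] at this
  have hA : H.dist u v ≤ H.dist u z + H.dist z v := hc.dist_triangle
  have hB : H.dist u w ≤ H.dist u z + H.dist z w := hc.dist_triangle
  have hC1 : H.dist z v ≤ (p.takeUntil z hzmem).length := by
    rw [SimpleGraph.dist_comm]; exact dist_le _
  have hC2 : H.dist z w ≤ (p.dropUntil z hzmem).length := dist_le _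
  have hD : H.dist v w = p.length := hpl.symm
  have hE : H.dist u z = q.length := hql.symm
  omega
lemma subgraph_dist_ge {V : Type*} {G : SimpleGraph V} (H : G.Subgraph) (hc : H.Connected)
    (a b : H.verts) : G.dist a b ≤ H.coe.dist a b := by
  obtain ⟨p, hl⟩ := (hc a b).exists_walk_length_eq_dist
  calc G.dist ↑a ↑b ≤ (p.map H.hom).length := dist_le _
    _ = H.coe.dist a b := by rw [Walk.length_map, hl]

lemma steiner_median {V : Type*} [Fintype V] (G : SimpleGraph V) (hc : G.Connected)
    (u v w z : V) (hm : IsMedian G u v w z) :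
    2 * steinerDist G {u, v, w} = G.dist u v + G.dist u w + G.dist v w := by
  classical
  obtain ⟨h1, h2, h3⟩ := hm
  -- upper bound subgraph
  obtain ⟨pa, hpa⟩ := hc.exists_walk_length_eq_dist z u
  obtain ⟨pb, hpb⟩ := hc.exists_walk_length_eq_dist z v
  obtain ⟨pc, hpc⟩ := hc.exists_walk_length_eq_dist z w
  set H0 : G.Subgraph := pa.toSubgraph ⊔ pb.toSubgraph ⊔ pc.toSubgraph with hH0
  have hconn : H0.Connected := by
    refine Subgraph.connected_sup ?_ pc.toSubgraph_connected.preconnected ⟨z, ?_, pc.start_mem_verts_toSubgraph⟩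
    · exact (Subgraph.connected_sup pa.toSubgraph_connected.preconnected pb.toSubgraph_connected.preconnected
        ⟨z, pa.start_mem_verts_toSubgraph, pb.start_mem_verts_toSubgraph⟩).preconnected
    · exact Or.inl pa.start_mem_verts_toSubgraph
  have hverts : ({u, v, w} : Set V) ⊆ H0.verts := by
    intro x hx
    rcases hx with rfl | rfl | rfl
    · exact Or.inl (Or.inl pa.end_mem_verts_toSubgraph)
    · exact Or.inl (Or.inr pb.end_mem_verts_toSubgraph)
    · exact Or.inr pc.end_mem_verts_toSubgraph
  have hedge : H0.edgeSet.ncard ≤ G.dist z u + G.dist z v + G.dist z w := by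
    have hsub : H0.edgeSet ⊆ ↑(pa.edges.toFinset ∪ pb.edges.toFinset ∪ pc.edges.toFinset) := by
      intro e he
      rw [hH0] at he
      simp only [Subgraph.edgeSet_sup, Set.mem_union, Walk.mem_edges_toSubgraph] at he
      simp only [Finset.coe_union, Set.mem_union, List.coe_toFinset, Set.mem_setOf_eq]
      tauto
    calc H0.edgeSet.ncard ≤ (↑(pa.edges.toFinset ∪ pb.edges.toFinset ∪ pc.edges.toFinset) :
          Set (Sym2 V)).ncard := Set.ncard_le_ncard hsub (Set.toFinite _)
      _ = (pa.edges.toFinset ∪ pb.edges.toFinset ∪ pc.edges.toFinset).card :=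
          Set.ncard_coe_finset _
      _ ≤ pa.edges.toFinset.card + pb.edges.toFinset.card + pc.edges.toFinset.card := by
          refine le_trans (Finset.card_union_le _ _) ?_
          exact Nat.add_le_add_right (Finset.card_union_le _ _) _
      _ ≤ pa.edges.length + pb.edges.length + pc.edges.length := by
          gcongr <;> exact List.toFinset_card_le _
      _ = G.dist z u + G.dist z v + G.dist z w := by
          rw [Walk.length_edges, Walk.length_edges, Walk.length_edges, hpa, hpb, hpc]
  have hmem : H0.edgeSet.ncard ∈ {n | ∃ H : G.Subgraph, H.Connected ∧
      ({u, v, w} : Set V) ⊆ H.verts ∧ H.edgeSet.ncard = n} := ⟨H0, hconn, hverts, rfl⟩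
  have hub : steinerDist G {u, v, w} ≤ G.dist z u + G.dist z v + G.dist z w :=
    le_trans (Nat.sInf_le hmem) hedge
  -- lower bound
  have hlb : G.dist u v + G.dist u w + G.dist v w ≤ 2 * steinerDist G {u, v, w} := by
    have hmem2 : steinerDist G {u, v, w} ∈ {n | ∃ H : G.Subgraph, H.Connected ∧
        ({u, v, w} : Set V) ⊆ H.verts ∧ H.edgeSet.ncard = n} := Nat.sInf_mem ⟨_, hmem⟩
    obtain ⟨H, hHc, hHv, hHn⟩ := hmem2
    have hu : u ∈ H.verts := hHv (by simp)
    have hv : v ∈ H.verts := hHv (by simp)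
    have hw : w ∈ H.verts := hHv (by simp)
    have hKe : H.coe.edgeSet.ncard = H.edgeSet.ncard := by
      rw [← Subgraph.image_coe_edgeSet_coe]
      exact (Set.ncard_image_of_injective _ (Sym2.map.injective Subtype.val_injective)).symm
    have hKc : H.coe.Connected := hHc
    have := sum3_dist_le H.coe hKc ⟨u, hu⟩ ⟨v, hv⟩ ⟨w, hw⟩
    have d1 := subgraph_dist_ge H hHc ⟨u, hu⟩ ⟨v, hv⟩
    have d2 := subgraph_dist_ge H hHc ⟨u, hu⟩ ⟨w, hw⟩
    have d3 := subgraph_dist_ge H hHc ⟨v, hv⟩ ⟨w, hw⟩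
    simp only at d1 d2 d3
    omega
  have hsum : G.dist u v + G.dist u w + G.dist v w
      = 2 * (G.dist z u + G.dist z v + G.dist z w) := by
    have c1 : G.dist u z = G.dist z u := dist_comm ..
    have c2 : G.dist v z = G.dist z v := dist_comm ..
    omega
  omega
lemma count_pairs {V : Type*} [Fintype V] [DecidableEq V] {a b : V} (hab : a ≠ b) :
    ((Finset.powersetCard 3 (univ : Finset V)).filter fun S => a ∈ S ∧ b ∈ S).card
      = Fintype.card V - 2 := by
  have hcardab : ({a, b} : Finset V).card = 2 := card_pair hab
  have himg : (Finset.powersetCard 3 (univ : Finset V)).filter (fun S => a ∈ S ∧ b ∈ S)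
      = (univ \ {a, b}).image (fun x => insert x {a, b}) := by
    ext S
    simp only [mem_filter, mem_powersetCard_univ, mem_image, mem_sdiff, mem_univ, true_and]
    constructor
    · rintro ⟨h3, ha, hb⟩
      have hsub : {a, b} ⊆ S := by
        intro x hx
        simp only [mem_insert, mem_singleton] at hx
        rcases hx with rfl | rfl <;> assumption
      have hone : (S \ {a, b}).card = 1 := by
        rw [card_sdiff_of_subset hsub, h3, hcardab]
      obtain ⟨c, hc⟩ := card_eq_one.mp hone
      have hcmem : c ∈ S \ {a, b} := hc ▸ mem_singleton_self c
      rw [mem_sdiff] at hcmem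
      refine ⟨c, hcmem.2, ?_⟩
      rw [Finset.insert_eq, ← hc, sdiff_union_of_subset hsub]
    · rintro ⟨c, hc, rfl⟩
      have hca : c ∉ ({a, b} : Finset V) := hc
      refine ⟨?_, by simp, by simp⟩
      rw [card_insert_of_notMem hca, hcardab]
  rw [himg, Finset.card_image_of_injOn, card_sdiff_of_subset (subset_univ _), card_univ, hcardab]
  intro x hx x' hx' h
  simp only [coe_sdiff, coe_univ, Set.mem_diff, Set.mem_univ, true_and, coe_insert,
    coe_singleton, Set.mem_insert_iff, Set.mem_singleton_iff, not_or] at hx hx'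
  have hmx : x ∈ insert x' ({a, b} : Finset V) := by
    have h' : insert x ({a, b} : Finset V) = insert x' ({a, b} : Finset V) := h
    rw [← h']; exact mem_insert_self x {a, b}
  simp only [mem_insert, mem_singleton] at hmx
  rcases hmx with rfl | rfl | rfl
  · rfl
  · exact absurd rfl hx.1
  · exact absurd rfl hx.2

lemma offDiag_sum3 {V : Type*} [DecidableEq V] {u v w : V} (huv : u ≠ v) (huw : u ≠ w)
    (hvw : v ≠ w) (f : V → V → ℕ) :
    ∑ p ∈ ({u, v, w} : Finset V).offDiag, f p.1 p.2
      = f u v + f u w + f v u + f v w + f w u + f w v := by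
  have h : ∀ s : Finset V, ∑ p ∈ s.offDiag, f p.1 p.2
      = ∑ a ∈ s, ∑ b ∈ s, if a ≠ b then f a b else 0 := by
    intro s
    rw [show s.offDiag = (s ×ˢ s).filter (fun p => p.1 ≠ p.2) by ext; simp [and_assoc],
      Finset.sum_filter, Finset.sum_product]
  have hu : u ∉ ({v, w} : Finset V) := by simp [huv, huw]
  have hv : v ∉ ({w} : Finset V) := by simp [hvw]
  rw [h]
  simp only [show ({u, v, w} : Finset V) = insert u (insert v {w}) from rfl,
    Finset.sum_insert hu, Finset.sum_insert hv, Finset.sum_singleton]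
  simp only [ne_eq, not_true_eq_false, if_neg, if_pos, huv, huw, hvw, huv.symm, huw.symm,
    hvw.symm, not_false_eq_true, if_true, ite_true, ite_false, if_false]
  simp [huv, huw, hvw, huv.symm, huw.symm, hvw.symm]
  ring
lemma four_SW {V : Type*} [Fintype V] [DecidableEq V] (G : SimpleGraph V)
    (hG : IsModular G) :
    4 * SW 3 G = (Fintype.card V - 2) * ∑ p ∈ univ.offDiag, G.dist p.1 p.2 := by
  classical
  have hper : ∀ S ∈ Finset.powersetCard 3 (univ : Finset V),
      4 * steinerDist G (S : Set V) = ∑ p ∈ S.offDiag, G.dist p.1 p.2 := by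
    intro S hS
    obtain ⟨u, v, w, huv, huw, hvw, rfl⟩ := card_eq_three.mp (mem_powersetCard_univ.mp hS)
    obtain ⟨z, hz⟩ := hG.2 u v w
    have hst := steiner_median G hG.1 u v w z hz
    have hcoe : (({u, v, w} : Finset V) : Set V) = {u, v, w} := by simp
    rw [hcoe, offDiag_sum3 huv huw hvw]
    have c1 : G.dist v u = G.dist u v := dist_comm ..
    have c2 : G.dist w u = G.dist u w := dist_comm ..
    have c3 : G.dist w v = G.dist v w := dist_comm ..
    omega
  have h1 : 4 * SW 3 G = ∑ S ∈ Finset.powersetCard 3 (univ : Finset V),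
      ∑ p ∈ S.offDiag, G.dist p.1 p.2 := by
    rw [SW, Finset.mul_sum]
    exact Finset.sum_congr rfl hper
  have hoff : ∀ S : Finset V, S.offDiag
      = univ.offDiag.filter (fun p => p.1 ∈ S ∧ p.2 ∈ S) := by
    intro S
    ext p
    simp only [Finset.mem_offDiag, Finset.mem_filter, mem_univ, true_and]
    tauto
  rw [h1]
  calc ∑ S ∈ Finset.powersetCard 3 (univ : Finset V), ∑ p ∈ S.offDiag, G.dist p.1 p.2
      = ∑ S ∈ Finset.powersetCard 3 (univ : Finset V), ∑ p ∈ univ.offDiag,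
          if p.1 ∈ S ∧ p.2 ∈ S then G.dist p.1 p.2 else 0 := by
        refine Finset.sum_congr rfl fun S _ => ?_
        rw [hoff S, Finset.sum_filter]
    _ = ∑ p ∈ univ.offDiag, ∑ S ∈ Finset.powersetCard 3 (univ : Finset V),
          if p.1 ∈ S ∧ p.2 ∈ S then G.dist p.1 p.2 else 0 := Finset.sum_comm
    _ = ∑ p ∈ univ.offDiag, (Fintype.card V - 2) * G.dist p.1 p.2 := by
        refine Finset.sum_congr rfl fun p hp => ?_
        have hne : p.1 ≠ p.2 := (Finset.mem_offDiag.mp hp).2.2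
        rw [← Finset.sum_filter, Finset.sum_const, smul_eq_mul, count_pairs hne]
    _ = (Fintype.card V - 2) * ∑ p ∈ univ.offDiag, G.dist p.1 p.2 := by
        rw [Finset.mul_sum]

/-- For a modular graph `G` with at least three vertices,
`SW₃(G) = ((|V|-2)/2)·W(G)`. -/
theorem steiner_three_wiener_modular
    {V : Type*} [Fintype V] [DecidableEq V] (G : SimpleGraph V)
    (hG : IsModular G) (hV : 3 ≤ Fintype.card V) :
    (SW 3 G : ℝ) = ((Fintype.card V : ℝ) - 2) / 2 * wiener G := by
  have h4 := four_SW G hG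
  have hcast : (4 : ℝ) * (SW 3 G : ℝ)
      = ((Fintype.card V : ℝ) - 2) * ∑ p ∈ univ.offDiag, (G.dist p.1 p.2 : ℝ) := by
    have := congrArg (Nat.cast (R := ℝ)) h4
    push_cast [Nat.cast_sub (by omega : 2 ≤ Fintype.card V)] at this
    convert this using 2
  rw [wiener]
  field_simp
  linarith
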